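/- Let c be an even integer. Then the scaled ReLU function σ_sr(x; c) = max(c·x, 0) is uniformly approximable by polynomials with integer coefficients on the interval [-1, 1]: for every ε > 0 there exists a polynomial p with integer coefficients such that |max(c·x, 0) - p(x)| ≤ ε for all x ∈ [-1, 1]. -/

import Mathlib

open Polynomial Finset Filter Topology unitInterval


lemma aux_vpow (v : ℝ) (hv0 : 0 ≤ v) (hv1 : v ≤ 1) (m : ℕ) (hm : 1 ≤ m) :
    v * (1 - v) ^ m ≤ 1 / m := by
  have h3 : (1 + (m : ℝ) * v) ≤ (1 + v) ^ m := one_add_mul_le_pow (by linarith) m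
  have h4 : (0:ℝ) ≤ 1 - v := by linarith
  have h6 : (0:ℝ) ≤ (1-v)^m := pow_nonneg h4 m
  have h5 : (1 - v)^m * (1+v)^m ≤ 1 := by
    rw [← mul_pow]
    exact pow_le_one₀ (by nlinarith) (by nlinarith)
  have h7 : (1-v)^m * (1 + (m:ℝ)*v) ≤ 1 := by nlinarith
  have hm' : (0:ℝ) < m := by exact_mod_cast hm
  rw [le_div_iff₀ hm']
  nlinarith

lemma sum_sym (u : ℝ) (n : ℕ) :
    ∑ j ∈ Ico 1 n, u^j * (1-u)^(n-j) = ∑ j ∈ Ico 1 n, (1-u)^j * u^(n-j) := by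
  refine Finset.sum_nbij' (fun j => n - j) (fun j => n - j) ?_ ?_ ?_ ?_ ?_
  · intro a ha; simp only [mem_Ico] at *; omega
  · intro a ha; simp only [mem_Ico] at *; omega
  · intro a ha; simp only [mem_Ico] at ha; show n - (n - a) = a; omega
  · intro a ha; simp only [mem_Ico] at ha; show n - (n - a) = a; omega
  · intro a ha
    simp only [mem_Ico] at ha
    have h1 : n - (n - a) = a := by omega
    rw [h1, mul_comm]

lemma sum_S_le_half (n : ℕ) (hn : 2 ≤ n) (v : ℝ) (hv0 : 0 ≤ v) (hv1 : v ≤ 1/2) :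
    ∑ j ∈ Ico 1 n, v^j * (1-v)^(n-j) ≤ 4 / n + n * (2/3)^n := by
  have hnR : (0:ℝ) < n := by positivity
  rcases le_or_gt v (1/3) with h | h
  · -- small case
    have hkey : ∀ j ∈ Ico 1 n, v^j*(1-v)^(n-j) ≤ (v*(1-v)^(n-1)) * (1/2)^(j-1) := by
      intro j hj
      simp only [mem_Ico] at hj
      have e1 : v ^ j = v * v^(j-1) := by
        rw [← pow_succ']
        congr 1; omega
      have e2 : v^(j-1) ≤ ((1-v)/2)^(j-1) :=
        pow_le_pow_left₀ hv0 (by linarith) _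
      have e3 : ((1-v)/2)^(j-1) = (1-v)^(j-1) * (1/2)^(j-1) := by
        rw [div_pow]; ring_nf; norm_num
      have e4 : (1-v)^(j-1) * (1-v)^(n-j) = (1-v)^(n-1) := by
        rw [← pow_add]; congr 1; omega
      have h4 : (0:ℝ) ≤ 1 - v := by linarith
      calc v^j * (1-v)^(n-j) = (v * v^(j-1)) * (1-v)^(n-j) := by rw [e1]
        _ ≤ (v * ((1-v)/2)^(j-1)) * (1-v)^(n-j) := by
            apply mul_le_mul_of_nonneg_right _ (pow_nonneg h4 _)
            exact mul_le_mul_of_nonneg_left e2 hv0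
        _ = (v*(1-v)^(n-1)) * (1/2)^(j-1) := by rw [e3, ← e4]; ring
    have hsum2 : ∑ j ∈ Ico 1 n, ((1:ℝ)/2)^(j-1) ≤ 2 := by
      rw [Finset.sum_Ico_eq_sum_range]
      have : ∀ i ∈ range (n-1), ((1:ℝ)/2)^(1+i-1) = (1/2)^i := by
        intro i _; congr 1; omega
      rw [Finset.sum_congr rfl this]
      exact sum_geometric_two_le _
    have hvp : v*(1-v)^(n-1) ≤ 2/n := by
      have := aux_vpow v hv0 (by linarith) (n-1) (by omega)
      have hcast : ((n-1 : ℕ) : ℝ) = (n:ℝ) - 1 := by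
        push_cast [Nat.cast_sub (by omega : 1 ≤ n)]; ring
      rw [hcast] at this
      calc v*(1-v)^(n-1) ≤ 1/((n:ℝ)-1) := this
        _ ≤ 2/n := by
          rw [div_le_div_iff₀ (by linarith [show (2:ℝ) ≤ (n:ℝ) from by exact_mod_cast hn]) hnR]
          have : (2:ℝ) ≤ n := by exact_mod_cast hn
          linarith
    have hvpnn : 0 ≤ v*(1-v)^(n-1) := mul_nonneg hv0 (pow_nonneg (by linarith) _)
    calc ∑ j ∈ Ico 1 n, v^j * (1-v)^(n-j)
        ≤ ∑ j ∈ Ico 1 n, (v*(1-v)^(n-1)) * (1/2)^(j-1) := Finset.sum_le_sum hkey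
      _ = (v*(1-v)^(n-1)) * ∑ j ∈ Ico 1 n, (1/2)^(j-1) := by rw [mul_sum]
      _ ≤ (2/n) * 2 := by
          apply mul_le_mul hvp hsum2 (Finset.sum_nonneg (fun j _ => by positivity)) (by positivity)
      _ = 4/n := by ring
      _ ≤ 4/n + n*(2/3)^n := by
          have : (0:ℝ) ≤ (n:ℝ)*(2/3)^n := by positivity
          linarith
  · -- large case
    have hkey : ∀ j ∈ Ico 1 n, v^j*(1-v)^(n-j) ≤ ((2:ℝ)/3)^n := by
      intro j hj
      simp only [mem_Ico] at hj
      have e1 : v^j ≤ ((2:ℝ)/3)^j := pow_le_pow_left₀ hv0 (by linarith) _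
      have e2 : (1-v)^(n-j) ≤ ((2:ℝ)/3)^(n-j) :=
        pow_le_pow_left₀ (by linarith) (by linarith) _
      calc v^j * (1-v)^(n-j) ≤ ((2:ℝ)/3)^j * ((2:ℝ)/3)^(n-j) := by
            apply mul_le_mul e1 e2 (pow_nonneg (by linarith) _) (by positivity)
        _ = ((2:ℝ)/3)^n := by rw [← pow_add]; congr 1; omega
    calc ∑ j ∈ Ico 1 n, v^j * (1-v)^(n-j)
        ≤ ∑ _j ∈ Ico 1 n, ((2:ℝ)/3)^n := Finset.sum_le_sum hkey
      _ = (n-1 : ℕ) * ((2:ℝ)/3)^n := by rw [Finset.sum_const, Nat.card_Ico]; simp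
      _ ≤ n * ((2:ℝ)/3)^n := by
          apply mul_le_mul_of_nonneg_right _ (by positivity)
          exact_mod_cast Nat.sub_le n 1
      _ ≤ 4/n + n*(2/3)^n := by
          have : (0:ℝ) ≤ 4/n := by positivity
          linarith

lemma sum_S_le (n : ℕ) (hn : 2 ≤ n) (u : ℝ) (hu0 : 0 ≤ u) (hu1 : u ≤ 1) :
    ∑ j ∈ Ico 1 n, u^j * (1-u)^(n-j) ≤ 4 / n + n * (2/3)^n := by
  rcases le_or_gt u (1/2) with h | h
  · exact sum_S_le_half n hn u hu0 h
  · rw [sum_sym]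
    have := sum_S_le_half n hn (1-u) (by linarith) (by linarith)
    simpa using this

lemma approx_sqrt (m : ℕ) : ∀ ε : ℝ, ε > 0 → ∃ P : Polynomial ℤ,
    ∀ u ∈ Set.Icc (0:ℝ) 1, |(m:ℝ) * Real.sqrt u - Polynomial.aeval u P| ≤ ε := by
  intro ε hε
  set f₀ : C(I, ℝ) := ⟨fun u => (m:ℝ) * Real.sqrt (u:ℝ),
    continuous_const.mul (Real.continuous_sqrt.comp continuous_subtype_val)⟩ with hf₀
  have hb := bernsteinApproximation_uniform f₀
  rw [Metric.tendsto_atTop] at hb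
  obtain ⟨N1, hN1⟩ := hb (ε/2) (by linarith)
  have hbnd : Tendsto (fun n : ℕ => 4/(n:ℝ) + n*(2/3)^n) atTop (𝓝 0) := by
    have h1 := tendsto_const_div_atTop_nhds_zero_nat (4:ℝ)
    have h2 := tendsto_self_mul_const_pow_of_lt_one (by norm_num : (0:ℝ) ≤ 2/3) (by norm_num)
    simpa using h1.add h2
  obtain ⟨N2, hN2⟩ := Metric.tendsto_atTop.mp hbnd ε hε
  set n := max (max N1 N2) 2 with hndef
  have hn2 : 2 ≤ n := le_max_right _ _
  have hnN1 : N1 ≤ n := le_trans (le_max_left _ _) (le_max_left _ _)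
  have hnN2 : N2 ≤ n := le_trans (le_max_right _ _) (le_max_left _ _)
  have hnR : (0:ℝ) < n := by positivity
  have hSn : 4/(n:ℝ) + n*(2/3)^n ≤ ε := by
    have := hN2 n hnN2
    rw [Real.dist_eq, sub_zero] at this
    exact le_of_lt (lt_of_abs_lt this)
  -- the integer polynomial
  set a : ℕ → ℝ := fun ν => (m:ℝ) * Real.sqrt ((ν:ℝ)/n) * (n.choose ν) with ha
  set P : Polynomial ℤ :=
    ∑ ν ∈ range (n+1), Polynomial.C (round (a ν)) * X^ν * (1-X)^(n-ν) with hP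
  refine ⟨P, ?_⟩
  intro u hu
  obtain ⟨hu0, hu1⟩ := hu
  set x : I := ⟨u, hu0, hu1⟩ with hx
  -- Bernstein value
  have hBx : bernsteinApproximation n f₀ x
      = ∑ ν ∈ range (n+1), a ν * (u^ν * (1-u)^(n-ν)) := by
    rw [bernsteinApproximation]
    rw [ContinuousMap.coe_sum, Finset.sum_apply]
    rw [← Fin.sum_univ_eq_sum_range (fun ν => a ν * (u^ν * (1-u)^(n-ν)))]
    congr 1
    funext ν
    simp only [ContinuousMap.smul_apply, bernstein_apply, smul_eq_mul, hf₀,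
      ContinuousMap.coe_mk, bernstein.z, ha]
    simp only [ContinuousMap.mul_apply, ContinuousMap.const_apply, bernstein_apply]
    push_cast
    ring
  have hPx : (Polynomial.aeval u P : ℝ)
      = ∑ ν ∈ range (n+1), ((round (a ν) : ℤ) : ℝ) * (u^ν * (1-u)^(n-ν)) := by
    rw [hP, map_sum]
    apply Finset.sum_congr rfl
    intro ν _
    simp only [map_mul, map_pow, map_sub, map_one, aeval_C, aeval_X, algebraMap_int_eq,
      eq_intCast, map_intCast]
    ring
  have hdiff : bernsteinApproximation n f₀ x - Polynomial.aeval u P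
      = ∑ ν ∈ range (n+1), (a ν - ((round (a ν) : ℤ) : ℝ)) * (u^ν * (1-u)^(n-ν)) := by
    rw [hBx, hPx, ← Finset.sum_sub_distrib]
    congr 1; funext ν; ring
  have hIco : ∑ ν ∈ range (n+1), (a ν - ((round (a ν) : ℤ) : ℝ)) * (u^ν * (1-u)^(n-ν))
      = ∑ ν ∈ Ico 1 n, (a ν - ((round (a ν) : ℤ) : ℝ)) * (u^ν * (1-u)^(n-ν)) := by
    symm
    apply Finset.sum_subset
    · intro ν hν; simp only [mem_Ico, mem_range] at *; omega
    · intro ν hν hν'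
      simp only [mem_Ico, mem_range] at hν hν'
      have : ν = 0 ∨ ν = n := by omega
      rcases this with rfl | rfl
      · have : a 0 = 0 := by simp [ha]
        rw [this]; simp
      · have hnn : ((n:ℕ):ℝ)/((n:ℕ):ℝ) = 1 := div_self (ne_of_gt hnR)
        have : a n = (m:ℝ) := by
          simp only [ha]
          rw [hnn, Real.sqrt_one, Nat.choose_self]
          simp
        rw [this]
        simp [round_natCast]
  have habs : |bernsteinApproximation n f₀ x - Polynomial.aeval u P| ≤ ε/2 := by
    rw [hdiff, hIco]
    calc |∑ ν ∈ Ico 1 n, (a ν - ((round (a ν) : ℤ) : ℝ)) * (u^ν * (1-u)^(n-ν))|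
        ≤ ∑ ν ∈ Ico 1 n, |(a ν - ((round (a ν) : ℤ) : ℝ)) * (u^ν * (1-u)^(n-ν))| :=
          Finset.abs_sum_le_sum_abs _ _
      _ ≤ ∑ ν ∈ Ico 1 n, (1/2) * (u^ν * (1-u)^(n-ν)) := by
          apply Finset.sum_le_sum
          intro ν _
          have hwnn : (0:ℝ) ≤ u ^ ν * (1-u)^(n-ν) :=
            mul_nonneg (pow_nonneg hu0 _) (pow_nonneg (by linarith) _)
          rw [abs_mul, abs_of_nonneg hwnn]
          exact mul_le_mul_of_nonneg_right (abs_sub_round _) hwnn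
      _ = (1/2) * ∑ ν ∈ Ico 1 n, u^ν * (1-u)^(n-ν) := by rw [mul_sum]
      _ ≤ (1/2) * (4/n + n*(2/3)^n) := by
          apply mul_le_mul_of_nonneg_left (sum_S_le n hn2 u hu0 hu1) (by norm_num)
      _ ≤ (1/2) * ε := by linarith
      _ = ε/2 := by ring
  have hclose : |f₀ x - bernsteinApproximation n f₀ x| ≤ ε/2 := by
    have h1 := hN1 n hnN1
    have h2 := ContinuousMap.dist_apply_le_dist (f := bernsteinApproximation n f₀) (g := f₀) x
    rw [Real.dist_eq] at h2
    rw [abs_sub_comm]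
    linarith [le_trans h2 (le_of_lt h1)]
  have hfx : f₀ x = (m:ℝ) * Real.sqrt u := rfl
  calc |(m:ℝ) * Real.sqrt u - Polynomial.aeval u P|
      = |(f₀ x - bernsteinApproximation n f₀ x)
          + (bernsteinApproximation n f₀ x - Polynomial.aeval u P)| := by rw [hfx]; ring_nf
    _ ≤ |f₀ x - bernsteinApproximation n f₀ x|
          + |bernsteinApproximation n f₀ x - Polynomial.aeval u P| := abs_add_le _ _
    _ ≤ ε/2 + ε/2 := add_le_add hclose habs
    _ = ε := by ring

theorem scaled_relu_integer_poly_approximable (c : ℤ) (hc : Even c) :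
    ∀ ε : ℝ, ε > 0 → ∃ p : Polynomial ℤ,
      ∀ x ∈ Set.Icc (-1 : ℝ) 1, |max ((c : ℝ) * x) 0 - Polynomial.aeval x p| ≤ ε := by
  intro ε hε
  obtain ⟨k, hk⟩ := hc
  obtain ⟨P, hP⟩ := approx_sqrt k.natAbs ε hε
  refine ⟨Polynomial.C k * X + P.comp (X^2), ?_⟩
  intro x hx
  obtain ⟨hx1, hx2⟩ := hx
  have hu0 : (0:ℝ) ≤ x^2 := sq_nonneg x
  have hu1 : x^2 ≤ 1 := by nlinarith
  have h1 := hP (x^2) ⟨hu0, hu1⟩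
  have hs : Real.sqrt (x^2) = |x| := Real.sqrt_sq_eq_abs x
  have haev : (Polynomial.aeval x (Polynomial.C k * X + P.comp (X^2)) : ℝ)
      = (k:ℝ)*x + Polynomial.aeval (x^2) P := by
    simp [aeval_comp]
  have habs : ((k.natAbs : ℕ) : ℝ) = |(k:ℝ)| := by
    rw [Nat.cast_natAbs, Int.cast_abs]
  have hck : (c:ℝ) = 2*(k:ℝ) := by rw [hk]; push_cast; ring
  have hmax : max ((c:ℝ)*x) 0 = (k:ℝ)*x + ((k.natAbs : ℕ) : ℝ) * |x| := by
    rcases le_total 0 ((k:ℝ)*x) with h | h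
    · rw [max_eq_left (by rw [hck]; nlinarith)]
      have h2 : |(k:ℝ)| * |x| = (k:ℝ)*x := by rw [← abs_mul]; exact abs_of_nonneg h
      rw [habs, h2, hck]; ring
    · rw [max_eq_right (by rw [hck]; nlinarith)]
      have h2 : |(k:ℝ)| * |x| = -((k:ℝ)*x) := by rw [← abs_mul]; exact abs_of_nonpos h
      rw [habs, h2]; ring
  rw [haev, hmax]
  have hre : (k:ℝ)*x + ((k.natAbs : ℕ) : ℝ) * |x| - ((k:ℝ)*x + Polynomial.aeval (x^2) P)
      = ((k.natAbs : ℕ) : ℝ) * Real.sqrt (x^2) - Polynomial.aeval (x^2) P := by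
    rw [hs]; ring
  rw [hre]
  exact h1
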